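/- In the biased setting with P(ξ_n = 1 | F_{n−1}) = P(η_n = 1 | F_{n−1}) = p almost surely for a constant 0 < p < 1, for every n ≥ 1: P(ξ_{α_n} = 1, α_n < ∞) = (1/2)·P(α_n < ∞) − ((1 − 2p)/2)·∑_{i ≥ n−1} P(T_i = n − 1). -/

import Mathlib

open MeasureTheory ProbabilityTheory Filter Set

noncomputable section

variable {Ω : Type*}

/-- `Q n = 1` if the `n`-th moves agree, `0` if they are opposite. -/
def Qproc (ξ η : ℕ → Ω → ℝ) (n : ℕ) (ω : Ω) : ℕ :=
  if ξ n ω = η n ω then 1 else 0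

/-- `T n = ∑_{k=1}^n Q k`, the number of common movements up to step `n`. -/
def Tproc (ξ η : ℕ → Ω → ℝ) (n : ℕ) (ω : Ω) : ℕ :=
  ∑ k ∈ Finset.Icc 1 n, Qproc ξ η k ω

/-- `S n = n - T n`, the number of counter movements up to step `n`. -/
def Sproc (ξ η : ℕ → Ω → ℝ) (n : ℕ) (ω : Ω) : ℕ :=
  n - Tproc ξ η n ω

/-- `α n = inf {k ≥ 1 : T k = n}`, with `inf ∅ = ⊤`, valued in `ℕ∞`. -/
def alphaProc (ξ η : ℕ → Ω → ℝ) (n : ℕ) (ω : Ω) : ℕ∞ :=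
  ⨅ (k : ℕ) (_ : 1 ≤ k ∧ Tproc ξ η k ω = n), (k : ℕ∞)

/-- `β n = inf {k ≥ 1 : S k = n}`, with `inf ∅ = ⊤`, valued in `ℕ∞`. -/
def betaProc (ξ η : ℕ → Ω → ℝ) (n : ℕ) (ω : Ω) : ℕ∞ :=
  ⨅ (k : ℕ) (_ : 1 ≤ k ∧ Sproc ξ η k ω = n), (k : ℕ∞)

/-- `ξ̃_{α n}`: equal to `ξ_i` on `{α n = i}` (`i < ∞`) and to `ζ n` on `{α n = ∞}`. -/
def xiAlpha (ξ η ζ : ℕ → Ω → ℝ) (n : ℕ) (ω : Ω) : ℝ :=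
  if alphaProc ξ η n ω = ⊤ then ζ n ω else ξ (alphaProc ξ η n ω).toNat ω

/-- `ξ̃_{β m}`: equal to `ξ_i` on `{β m = i}` (`i < ∞`) and to `ψ m` on `{β m = ∞}`. -/
def xiBeta (ξ η ψ : ℕ → Ω → ℝ) (m : ℕ) (ω : Ω) : ℝ :=
  if betaProc ξ η m ω = ⊤ then ψ m ω else ξ (betaProc ξ η m ω).toNat ω

/-- The common-movement walk `X n = ∑_{i=1}^n ξ̃_{α i}`. -/
def Xproc (ξ η ζ : ℕ → Ω → ℝ) (n : ℕ) (ω : Ω) : ℝ :=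
  ∑ i ∈ Finset.Icc 1 n, xiAlpha ξ η ζ i ω

/-- The counter-movement walk `Y n = ∑_{i=1}^n ξ̃_{β i}`. -/
def Yproc (ξ η ψ : ℕ → Ω → ℝ) (n : ℕ) (ω : Ω) : ℝ :=
  ∑ i ∈ Finset.Icc 1 n, xiBeta ξ η ψ i ω

lemma Tproc_succ (ξ η : ℕ → Ω → ℝ) (j : ℕ) (ω : Ω) :
    Tproc ξ η (j+1) ω = Tproc ξ η j ω + Qproc ξ η (j+1) ω := by
  simp [Tproc, Finset.sum_Icc_succ_top (by omega : 1 ≤ j + 1)]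

lemma Qproc_le_one (ξ η : ℕ → Ω → ℝ) (k : ℕ) (ω : Ω) : Qproc ξ η k ω ≤ 1 := by
  unfold Qproc; split <;> omega

lemma Tproc_zero (ξ η : ℕ → Ω → ℝ) (ω : Ω) : Tproc ξ η 0 ω = 0 := by
  simp [Tproc]

lemma Tproc_le_self (ξ η : ℕ → Ω → ℝ) (j : ℕ) (ω : Ω) : Tproc ξ η j ω ≤ j := by
  induction j with
  | zero => simp [Tproc_zero]
  | succ m ih =>
    have := Qproc_le_one ξ η (m+1) ω
    rw [Tproc_succ]; omega

lemma Tproc_mono (ξ η : ℕ → Ω → ℝ) {j k : ℕ} (h : j ≤ k) (ω : Ω) :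
    Tproc ξ η j ω ≤ Tproc ξ η k ω := by
  apply Finset.sum_le_sum_of_subset (Finset.Icc_subset_Icc_right h)

lemma alpha_ne_top_iff (ξ η : ℕ → Ω → ℝ) (n : ℕ) (ω : Ω) :
    alphaProc ξ η n ω ≠ ⊤ ↔ ∃ k, 1 ≤ k ∧ Tproc ξ η k ω = n := by
  rw [← not_iff_not]
  push_neg
  simp only [alphaProc, iInf_eq_top, and_imp]
  constructor
  · intro h k h1 h2
    have := h k h1 h2
    exact absurd this (by simp)
  · intro h k h1 h2
    exact absurd h2 (h k h1)

lemma alpha_eq_find (ξ η : ℕ → Ω → ℝ) (n : ℕ) (ω : Ω)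
    (h : ∃ k, 1 ≤ k ∧ Tproc ξ η k ω = n) :
    alphaProc ξ η n ω = (Nat.find h : ℕ∞) := by
  apply le_antisymm
  · exact iInf₂_le (Nat.find h) (Nat.find_spec h)
  · exact le_iInf₂ fun k hk => by exact_mod_cast Nat.find_min' h hk

lemma alpha_eq_succ_iff (ξ η : ℕ → Ω → ℝ) {n : ℕ} (hn : 1 ≤ n) (j : ℕ) (ω : Ω) :
    alphaProc ξ η n ω = ((j + 1 : ℕ) : ℕ∞) ↔
      Tproc ξ η j ω = n - 1 ∧ ξ (j+1) ω = η (j+1) ω := by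
  constructor
  · intro h
    have hne : alphaProc ξ η n ω ≠ ⊤ := by
      rw [h]; exact_mod_cast (ENat.coe_ne_top (j+1))
    obtain hex := (alpha_ne_top_iff ξ η n ω).1 hne
    have hfind : (Nat.find hex : ℕ∞) = ((j+1 : ℕ) : ℕ∞) := by
      rw [← alpha_eq_find ξ η n ω hex, h]
    have hfj : Nat.find hex = j + 1 := by exact_mod_cast hfind
    have hspec := Nat.find_spec hex
    rw [hfj] at hspec
    have hmin : ∀ k < j + 1, ¬(1 ≤ k ∧ Tproc ξ η k ω = n) := by
      intro k hk
      have := Nat.find_min hex (by omega : k < Nat.find hex)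
      exact this
    have hTj : Tproc ξ η j ω ≠ n := by
      rcases Nat.eq_zero_or_pos j with hj | hj
      · subst hj; rw [Tproc_zero]; omega
      · intro hc; exact hmin j (by omega) ⟨hj, hc⟩
    by_cases hQ : ξ (j+1) ω = η (j+1) ω
    · refine ⟨?_, hQ⟩
      have hq1 : Qproc ξ η (j+1) ω = 1 := if_pos hQ
      have := Tproc_succ ξ η j ω
      omega
    · exfalso
      have hq0 : Qproc ξ η (j+1) ω = 0 := if_neg hQ
      have := Tproc_succ ξ η j ω
      have := hspec.2
      omega
  · rintro ⟨hT, hQ⟩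
    have hq1 : Qproc ξ η (j+1) ω = 1 := if_pos hQ
    have hT1 : Tproc ξ η (j+1) ω = n := by
      have := Tproc_succ ξ η j ω; omega
    apply le_antisymm
    · exact iInf₂_le (j+1) ⟨by omega, hT1⟩
    · refine le_iInf₂ fun k hk => ?_
      have hjk : j + 1 ≤ k := by
        by_contra hc
        push_neg at hc
        have hkj : k ≤ j := by omega
        have := Tproc_mono ξ η hkj ω
        have := hk.2
        omega
      exact_mod_cast hjk

lemma Tproc_measurable {mΩ : MeasurableSpace Ω} (F : MeasureTheory.Filtration ℕ mΩ)
    (ξ η : ℕ → Ω → ℝ)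
    (hξm : ∀ n, 1 ≤ n → Measurable[F n] (ξ n))
    (hηm : ∀ n, 1 ≤ n → Measurable[F n] (η n))
    (j : ℕ) : Measurable[F j] (Tproc ξ η j) := by
  apply Finset.measurable_sum
  intro k hk
  simp only [Finset.mem_Icc] at hk
  have hQ : Measurable[F k] (Qproc ξ η k) := by
    have hs : MeasurableSet[F k] {ω | ξ k ω = η k ω} := by
      have : {ω | ξ k ω = η k ω} = (fun ω => ξ k ω - η k ω) ⁻¹' {0} := by
        ext ω; simp [sub_eq_zero]
      rw [this]
      exact ((hξm k hk.1).sub (hηm k hk.1)) (measurableSet_singleton 0)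
    unfold Qproc
    exact Measurable.ite hs measurable_const measurable_const
  exact hQ.mono (F.mono hk.2) le_rfl

lemma key_int {mΩ : MeasurableSpace Ω} (P : Measure Ω) [IsProbabilityMeasure P]
    (F : MeasureTheory.Filtration ℕ mΩ) {p : ℝ}
    (j : ℕ) (A : Set Ω) (hA : MeasurableSet[F j] A) (f : Ω → ℝ)
    (hS : MeasurableSet {ω | f ω = 1})
    (hcond : P[({ω | f ω = 1}).indicator (fun _ => (1 : ℝ)) | F j] =ᵐ[P] fun _ => p) :
    (P (A ∩ {ω | f ω = 1})).toReal = p * (P A).toReal := by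
  set S := {ω | f ω = 1} with hSdef
  have hint : Integrable (S.indicator fun _ => (1:ℝ)) P := (integrable_const 1).indicator hS
  have h1 : ∫ ω in A, S.indicator (fun _ => (1:ℝ)) ω ∂P = (P (A ∩ S)).toReal := by
    rw [setIntegral_indicator hS, setIntegral_const, smul_eq_mul, mul_one]; rfl
  have h2 : ∫ ω in A, S.indicator (fun _ => (1:ℝ)) ω ∂P
      = ∫ ω in A, (P[S.indicator (fun _ => (1:ℝ)) | F j]) ω ∂P :=
    (setIntegral_condExp (F.le j) hint hA).symm
  have h3 : ∫ ω in A, (P[S.indicator (fun _ => (1:ℝ)) | F j]) ω ∂P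
      = ∫ _ω in A, p ∂P := integral_congr_ae (ae_restrict_of_ae hcond)
  rw [setIntegral_const, smul_eq_mul, mul_comm] at h3
  rw [← h1, h2, h3]; rfl

lemma meas_split {mΩ : MeasurableSpace Ω} (P : Measure Ω) [IsProbabilityMeasure P]
    (B U : Set Ω) (hU : MeasurableSet U) :
    (P B).toReal = (P (B ∩ U)).toReal + (P (B ∩ Uᶜ)).toReal := by
  have h := measure_inter_add_diff (μ := P) B hU
  rw [diff_eq] at h
  rw [← h, ENNReal.toReal_add (measure_ne_top P _) (measure_ne_top P _)]

lemma quad {mΩ : MeasurableSpace Ω} (P : Measure Ω) [IsProbabilityMeasure P]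
    (A S U : Set Ω) (hA : MeasurableSet A) (hS : MeasurableSet S) (hU : MeasurableSet U)
    {p : ℝ}
    (hSp : (P (A ∩ S)).toReal = p * (P A).toReal)
    (hUp : (P (A ∩ U)).toReal = p * (P A).toReal) :
    (P (A ∩ S ∩ U)).toReal
      = 1/2 * (P ((A ∩ S ∩ U) ∪ (A ∩ Sᶜ ∩ Uᶜ))).toReal + (2*p - 1)/2 * (P A).toReal := by
  have h1 := meas_split P A S hS
  have h2 := meas_split P (A ∩ S) U hU
  have h3 := meas_split P (A ∩ Sᶜ) U hU
  have h4 := meas_split P (A ∩ U) S hS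
  have e1 : A ∩ U ∩ S = A ∩ S ∩ U := by rw [inter_right_comm]
  have e2 : A ∩ U ∩ Sᶜ = A ∩ Sᶜ ∩ U := by rw [inter_right_comm]
  rw [e1, e2] at h4
  have hdis : Disjoint (A ∩ S ∩ U) (A ∩ Sᶜ ∩ Uᶜ) :=
    disjoint_compl_right.mono (inter_subset_left.trans inter_subset_right)
      (inter_subset_left.trans inter_subset_right)
  have h5 : (P ((A ∩ S ∩ U) ∪ (A ∩ Sᶜ ∩ Uᶜ))).toReal
      = (P (A ∩ S ∩ U)).toReal + (P (A ∩ Sᶜ ∩ Uᶜ)).toReal := by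
    rw [measure_union hdis ((hA.inter hS.compl).inter hU.compl),
      ENNReal.toReal_add (measure_ne_top P _) (measure_ne_top P _)]
  linarith

theorem stmt_17
    {Ω : Type*} [mΩ : MeasurableSpace Ω] (P : Measure Ω) [IsProbabilityMeasure P]
    (F : MeasureTheory.Filtration ℕ mΩ) (hF0 : F 0 = ⊥)
    (ξ η : ℕ → Ω → ℝ) (p : ℝ) (hp0 : 0 < p) (hp1 : p < 1)
    (hξm : ∀ n, 1 ≤ n → Measurable[F n] (ξ n))
    (hηm : ∀ n, 1 ≤ n → Measurable[F n] (η n))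
    (hξv : ∀ n ω, ξ n ω = 1 ∨ ξ n ω = -1)
    (hηv : ∀ n ω, η n ω = 1 ∨ η n ω = -1)
    (hp : ∀ n, 1 ≤ n →
      (P[({ω | ξ n ω = 1}).indicator (fun _ => (1 : ℝ)) | F (n - 1)] =ᵐ[P] fun _ => p) ∧
      (P[({ω | η n ω = 1}).indicator (fun _ => (1 : ℝ)) | F (n - 1)] =ᵐ[P] fun _ => p)) :
    ∀ n : ℕ, 1 ≤ n →
      (P {ω | alphaProc ξ η n ω ≠ ⊤ ∧ ξ (alphaProc ξ η n ω).toNat ω = 1}).toReal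
        = 1 / 2 * (P {ω | alphaProc ξ η n ω ≠ ⊤}).toReal
          - (1 - 2 * p) / 2 *
            ∑' i : {i : ℕ // n - 1 ≤ i}, (P {ω | Tproc ξ η (i : ℕ) ω = n - 1}).toReal := by
  intro n hn
  classical
  -- abbreviations (plain functions, no `set` to avoid binder rewriting issues)
  have hAmF : ∀ j : ℕ, MeasurableSet[F j] {ω | Tproc ξ η j ω = n - 1} := fun j =>
    (Tproc_measurable F ξ η hξm hηm j) (measurableSet_singleton (n-1))
  have hAm : ∀ j : ℕ, MeasurableSet {ω | Tproc ξ η j ω = n - 1} := fun j =>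
    F.le j _ (hAmF j)
  have hSm : ∀ k, 1 ≤ k → MeasurableSet {ω | ξ k ω = 1} := fun k hk =>
    F.le k _ ((hξm k hk) (measurableSet_singleton 1))
  have hUm : ∀ k, 1 ≤ k → MeasurableSet {ω | η k ω = 1} := fun k hk =>
    F.le k _ ((hηm k hk) (measurableSet_singleton 1))
  have hQm : ∀ k, 1 ≤ k → MeasurableSet {ω | ξ k ω = η k ω} := fun k hk => by
    have he : {ω | ξ k ω = η k ω} = (fun ω => ξ k ω - η k ω) ⁻¹' {0} := by
      ext ω; simp [sub_eq_zero]
    rw [he]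
    exact F.le k _ (((hξm k hk).sub (hηm k hk)) (measurableSet_singleton 0))
  set E : ℕ → Set Ω :=
    fun j => {ω | Tproc ξ η j ω = n - 1} ∩ {ω | ξ (j+1) ω = η (j+1) ω} with hEdef
  have hEm : ∀ j, MeasurableSet (E j) := fun j => (hAm j).inter (hQm (j+1) (by omega))
  have hESm : ∀ j, MeasurableSet (E j ∩ {ω | ξ (j+1) ω = 1}) := fun j =>
    (hEm j).inter (hSm (j+1) (by omega))
  have hEalpha : ∀ (j : ℕ) (ω : Ω), ω ∈ E j ↔ alphaProc ξ η n ω = ((j+1 : ℕ) : ℕ∞) :=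
    fun j ω => (alpha_eq_succ_iff ξ η hn j ω).symm
  have hdisj : Pairwise (Function.onFun Disjoint fun j => E j) := by
    intro i j hij
    rw [Function.onFun, Set.disjoint_left]
    intro ω hi hj
    have h1 := (hEalpha i ω).1 hi
    have h2 := (hEalpha j ω).1 hj
    rw [h1] at h2
    have : i + 1 = j + 1 := by exact_mod_cast h2
    exact hij (by omega)
  have hdisj2 : Pairwise (Function.onFun Disjoint fun j => E j ∩ {ω | ξ (j+1) ω = 1}) := by
    intro i j hij
    exact (hdisj hij).mono inter_subset_left inter_subset_left
  -- set identities
  have hset1 : {ω | alphaProc ξ η n ω ≠ ⊤} = ⋃ j, E j := by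
    ext ω
    simp only [mem_setOf_eq, mem_iUnion]
    constructor
    · intro hne
      obtain hex := (alpha_ne_top_iff ξ η n ω).1 hne
      have hf := alpha_eq_find ξ η n ω hex
      have h1 : 1 ≤ Nat.find hex := (Nat.find_spec hex).1
      refine ⟨Nat.find hex - 1, (hEalpha _ ω).2 ?_⟩
      rw [hf]; congr 1; omega
    · rintro ⟨j, hj⟩
      rw [(hEalpha j ω).1 hj]
      exact_mod_cast ENat.coe_ne_top (j+1)
  have hset2 : {ω | alphaProc ξ η n ω ≠ ⊤ ∧ ξ (alphaProc ξ η n ω).toNat ω = 1}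
      = ⋃ j, E j ∩ {ω | ξ (j+1) ω = 1} := by
    ext ω
    simp only [mem_setOf_eq, mem_iUnion, mem_inter_iff]
    constructor
    · rintro ⟨hne, hxi⟩
      obtain hex := (alpha_ne_top_iff ξ η n ω).1 hne
      have hf := alpha_eq_find ξ η n ω hex
      have h1 : 1 ≤ Nat.find hex := (Nat.find_spec hex).1
      have hf' : alphaProc ξ η n ω = ((Nat.find hex - 1 + 1 : ℕ) : ℕ∞) := by
        rw [hf]; congr 1; omega
      refine ⟨Nat.find hex - 1, (hEalpha _ ω).2 hf', ?_⟩
      rw [hf'] at hxi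
      simpa using hxi
    · rintro ⟨j, hj, hs⟩
      have h := (hEalpha j ω).1 hj
      refine ⟨by rw [h]; exact_mod_cast ENat.coe_ne_top (j+1), ?_⟩
      rw [h]
      rw [ENat.toNat_coe]; exact hs
  -- measures of unions
  have hPunion1 : P {ω | alphaProc ξ η n ω ≠ ⊤} = ∑' j, P (E j) := by
    rw [hset1]; exact measure_iUnion hdisj hEm
  have hPunion2 : P {ω | alphaProc ξ η n ω ≠ ⊤ ∧ ξ (alphaProc ξ η n ω).toNat ω = 1}
      = ∑' j, P (E j ∩ {ω | ξ (j+1) ω = 1}) := by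
    rw [hset2]; exact measure_iUnion hdisj2 hESm
  have hane : (∑' j, P (E j)) ≠ ⊤ := by
    rw [← measure_iUnion hdisj hEm]; exact measure_ne_top P _
  have hcne : (∑' j, P (E j ∩ {ω | ξ (j+1) ω = 1})) ≠ ⊤ := by
    rw [← measure_iUnion hdisj2 hESm]; exact measure_ne_top P _
  have haSum : Summable (fun j => (P (E j)).toReal) := ENNReal.summable_toReal hane
  have hcSum : Summable (fun j => (P (E j ∩ {ω | ξ (j+1) ω = 1})).toReal) :=
    ENNReal.summable_toReal hcne
  have hAtot : (P {ω | alphaProc ξ η n ω ≠ ⊤}).toReal = ∑' j, (P (E j)).toReal := by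
    rw [hPunion1, ENNReal.tsum_toReal_eq (fun j => measure_ne_top P _)]
  have hCtot : (P {ω | alphaProc ξ η n ω ≠ ⊤ ∧ ξ (alphaProc ξ η n ω).toNat ω = 1}).toReal
      = ∑' j, (P (E j ∩ {ω | ξ (j+1) ω = 1})).toReal := by
    rw [hPunion2, ENNReal.tsum_toReal_eq (fun j => measure_ne_top P _)]
  -- the per-index identity
  have hkey : ∀ j, (P (E j ∩ {ω | ξ (j+1) ω = 1})).toReal
      = 1/2 * (P (E j)).toReal + (2*p - 1)/2 * (P {ω | Tproc ξ η j ω = n - 1}).toReal := by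
    intro j
    have hcondξ := (hp (j+1) (by omega)).1
    have hcondη := (hp (j+1) (by omega)).2
    simp only [Nat.add_sub_cancel] at hcondξ hcondη
    have hSp : (P ({ω | Tproc ξ η j ω = n - 1} ∩ {ω | ξ (j+1) ω = 1})).toReal
        = p * (P {ω | Tproc ξ η j ω = n - 1}).toReal :=
      key_int P F j _ (hAmF j) (ξ (j+1)) (hSm (j+1) (by omega)) hcondξ
    have hUp : (P ({ω | Tproc ξ η j ω = n - 1} ∩ {ω | η (j+1) ω = 1})).toReal
        = p * (P {ω | Tproc ξ η j ω = n - 1}).toReal :=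
      key_int P F j _ (hAmF j) (η (j+1)) (hUm (j+1) (by omega)) hcondη
    have hE2 : E j ∩ {ω | ξ (j+1) ω = 1}
        = {ω | Tproc ξ η j ω = n - 1} ∩ {ω | ξ (j+1) ω = 1} ∩ {ω | η (j+1) ω = 1} := by
      ext ω
      simp only [hEdef, mem_inter_iff, mem_setOf_eq]
      rcases hξv (j+1) ω with h1 | h1 <;> rcases hηv (j+1) ω with h2 | h2 <;>
        simp [h1, h2] <;> norm_num <;> tauto
    have hE1 : E j
        = ({ω | Tproc ξ η j ω = n - 1} ∩ {ω | ξ (j+1) ω = 1} ∩ {ω | η (j+1) ω = 1})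
          ∪ ({ω | Tproc ξ η j ω = n - 1} ∩ {ω | ξ (j+1) ω = 1}ᶜ ∩ {ω | η (j+1) ω = 1}ᶜ) := by
      ext ω
      simp only [hEdef, mem_union, mem_inter_iff, mem_setOf_eq, mem_compl_iff]
      rcases hξv (j+1) ω with h1 | h1 <;> rcases hηv (j+1) ω with h2 | h2 <;>
        simp [h1, h2] <;> norm_num <;> tauto
    rw [hE2, hE1]
    exact quad P _ _ _ (hAm j) (hSm (j+1) (by omega)) (hUm (j+1) (by omega)) hSp hUp
  -- rewrite the subtype tsum
  have hBsub : (∑' i : {i : ℕ // n - 1 ≤ i}, (P {ω | Tproc ξ η (i : ℕ) ω = n - 1}).toReal)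
      = ∑' j : ℕ, (P {ω | Tproc ξ η j ω = n - 1}).toReal := by
    have hsupp : Function.support (fun j : ℕ => (P {ω | Tproc ξ η j ω = n - 1}).toReal)
        ⊆ {i : ℕ | n - 1 ≤ i} := by
      intro i hi
      simp only [Function.mem_support] at hi
      by_contra hlt
      simp only [mem_setOf_eq, not_le] at hlt
      have hempty : {ω | Tproc ξ η i ω = n - 1} = (∅ : Set Ω) := by
        ext ω
        simp only [mem_setOf_eq, mem_empty_iff_false, iff_false]
        have := Tproc_le_self ξ η i ω
        omega
      rw [hempty] at hi
      simp at hi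
    exact tsum_subtype_eq_of_support_subset hsupp
  rw [hCtot, hAtot, hBsub]
  by_cases hps : p = 1/2
  · have hc : ∀ j, (P (E j ∩ {ω | ξ (j+1) ω = 1})).toReal = 1/2 * (P (E j)).toReal := by
      intro j; rw [hkey j, hps]; ring
    rw [tsum_congr hc, tsum_mul_left, hps]
    ring
  · have h2p : (2*p - 1) ≠ 0 := by intro h; apply hps; linarith
    have hbformula : ∀ j, (P {ω | Tproc ξ η j ω = n - 1}).toReal
        = ((P (E j ∩ {ω | ξ (j+1) ω = 1})).toReal - 1/2 * (P (E j)).toReal) * (2/(2*p-1)) := by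
      intro j
      have h := hkey j
      field_simp
      linarith
    have hbSum : Summable (fun j => (P {ω | Tproc ξ η j ω = n - 1}).toReal) :=
      (((hcSum.sub (haSum.mul_left (1/2)))).mul_right (2/(2*p-1))).congr
        (fun j => (hbformula j).symm)
    have hsplit : (∑' j, (P (E j ∩ {ω | ξ (j+1) ω = 1})).toReal)
        = 1/2 * (∑' j, (P (E j)).toReal)
          + (2*p - 1)/2 * ∑' j, (P {ω | Tproc ξ η j ω = n - 1}).toReal := by
      rw [tsum_congr hkey, Summable.tsum_add (haSum.mul_left _) (hbSum.mul_left _),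
        tsum_mul_left, tsum_mul_left]
    rw [hsplit]
    ring
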